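/- If a sequence (X_n) of centered jointly Gaussian real random variables converges in L² to Y with Var(X_n) = v > 0 for all n and Cov(X_n, X_m) → 0 as m → ∞ for each fixed n, then Y has variance v and Cov(X_n, Y) = 0 for all n; hence Y is independent of σ(X_n : n), contradicting measurability of Y with respect to σ(X_n : n). Thus no such L²-convergent subsequence exists. -/

import Mathlib

open MeasureTheory ProbabilityTheory Filter

noncomputable section

/-- Covariance of two real random variables. -/
def cov {Ω : Type*} [MeasurableSpace Ω] (P : Measure Ω) (X Y : Ω → ℝ) : ℝ :=
  ∫ ω, (X ω - ∫ a, X a ∂P) * (Y ω - ∫ a, Y a ∂P) ∂P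

/-- If `(X n)` is a sequence of centered jointly Gaussian real random variables with
`Var (X n) = v > 0` for all `n` and `Cov (X n) (X m) → 0` as `m → ∞` for each fixed `n`,
then no subsequence of `(X n)` converges in `L²`. -/
theorem stmt2 {Ω : Type*} [MeasurableSpace Ω] (P : Measure Ω) [IsProbabilityMeasure P]
    (X : ℕ → Ω → ℝ) (v : ℝ) (hv : 0 < v)
    (hmeas : ∀ n, Measurable (X n)) (hL2 : ∀ n, MemLp (X n) 2 P)
    (hgauss : ∀ (s : Finset ℕ) (c : ℕ → ℝ), ∃ (m : ℝ) (w : NNReal),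
      Measure.map (fun ω => ∑ i ∈ s, c i * X i ω) P = gaussianReal m w)
    (hcentered : ∀ n, ∫ ω, X n ω ∂P = 0)
    (hvar : ∀ n, variance (X n) P = v)
    (hcov : ∀ n, Tendsto (fun m => cov P (X n) (X m)) atTop (nhds 0)) :
    ¬ ∃ (φ : ℕ → ℕ) (Y : Ω → ℝ), StrictMono φ ∧ MemLp Y 2 P ∧
      Tendsto (fun k => eLpNorm (fun ω => X (φ k) ω - Y ω) 2 P) atTop (nhds 0) := by
  rintro ⟨φ, Y, hφ, hY2, hconv⟩
  -- work in the Hilbert space L² ℝ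
  set F : ℕ → Lp ℝ 2 P := fun k => (hL2 (φ k)).toLp (X (φ k)) with hF
  set YL : Lp ℝ 2 P := hY2.toLp Y with hYL
  -- F k → YL in L²
  have hnorm : ∀ k, ‖F k - YL‖ = (eLpNorm (fun ω => X (φ k) ω - Y ω) 2 P).toReal := by
    intro k
    rw [hF, hYL, ← MemLp.toLp_sub, Lp.norm_toLp]
    rfl
  have htend : Tendsto F atTop (nhds YL) := by
    rw [tendsto_iff_norm_sub_tendsto_zero]
    simp only [hnorm]
    have := (ENNReal.tendsto_toReal ENNReal.zero_ne_top).comp hconv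
    exact this
  -- inner products equal integrals
  have hinner : ∀ k j, (inner ℝ (F k) (F j) : ℝ) = ∫ ω, X (φ k) ω * X (φ j) ω ∂P := by
    intro k j
    rw [L2.inner_def]
    refine integral_congr_ae ?_
    filter_upwards [(hL2 (φ k)).coeFn_toLp, (hL2 (φ j)).coeFn_toLp] with ω h1 h2
    simp [hF, h1, h2, RCLike.inner_apply, mul_comm]
  -- covariance of centered variables is the inner product
  have hcov_eq : ∀ k j, cov P (X (φ k)) (X (φ j)) = (inner ℝ (F k) (F j) : ℝ) := by
    intro k j
    rw [hinner, cov, hcentered, hcentered]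
    simp
  -- ⟪F k, YL⟫ = 0 for all k
  have hFY : ∀ k, (inner ℝ (F k) YL : ℝ) = 0 := by
    intro k
    have h1 : Tendsto (fun j => (inner ℝ (F k) (F j) : ℝ)) atTop (nhds (inner ℝ (F k) YL)) :=
      (Tendsto.inner tendsto_const_nhds htend)
    have h2 : Tendsto (fun j => (inner ℝ (F k) (F j) : ℝ)) atTop (nhds 0) := by
      have := (hcov (φ k)).comp hφ.tendsto_atTop
      simpa [Function.comp_def, hcov_eq] using this
    exact tendsto_nhds_unique h1 h2
  -- ‖F k‖² = v
  have hFnorm : ∀ k, (inner ℝ (F k) (F k) : ℝ) = v := by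
    intro k
    rw [hinner, ← hvar (φ k),
      variance_of_integral_eq_zero (hmeas (φ k)).aemeasurable (hcentered (φ k))]
    congr 1
    ext ω
    simp [Pi.pow_apply, sq]
  -- ⟪YL, YL⟫ = 0 via limit of ⟪F k, YL⟫
  have hYY0 : (inner ℝ YL YL : ℝ) = 0 := by
    have h1 : Tendsto (fun k => (inner ℝ (F k) YL : ℝ)) atTop (nhds (inner ℝ YL YL)) :=
      Tendsto.inner htend tendsto_const_nhds
    have h2 : Tendsto (fun k => (inner ℝ (F k) YL : ℝ)) atTop (nhds 0) := by
      simpa [hFY] using (tendsto_const_nhds : Tendsto (fun _ : ℕ => (0:ℝ)) atTop (nhds 0))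
    exact tendsto_nhds_unique h1 h2
  -- but ⟪YL, YL⟫ = lim ⟪F k, F k⟫ = v
  have hYYv : (inner ℝ YL YL : ℝ) = v := by
    have h1 : Tendsto (fun k => (inner ℝ (F k) (F k) : ℝ)) atTop (nhds (inner ℝ YL YL)) :=
      Tendsto.inner htend htend
    have h2 : Tendsto (fun k => (inner ℝ (F k) (F k) : ℝ)) atTop (nhds v) := by
      simpa only [hFnorm] using (tendsto_const_nhds : Tendsto (fun _ : ℕ => v) atTop (nhds v))
    exact tendsto_nhds_unique h1 h2
  rw [hYY0] at hYYv
  exact absurd hYYv.symm (ne_of_gt hv)
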